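/- Suppose a : Γ → F satisfies, for all γ ∈ Γ: (γ+1)a(γ) = (γ−2)a(γ−1), γ·a(γ−1) = (γ−3)a(γ−2), and (γ+2)a(γ) = (γ−4)a(γ−2). Then a(γ) = 0 for all γ ∈ Γ. -/
import Mathlib


/-- if a finitely supported `a : Γ → F` satisfies
`(γ+1)a(γ) = (γ−2)a(γ−1)`, `γ·a(γ−1) = (γ−3)a(γ−2)` and
`(γ+2)a(γ) = (γ−4)a(γ−2)` for all `γ ∈ Γ`, then `a = 0`. -/
theorem finitely_supported_recurrences_zero
    {F : Type*} [Field F] [CharZero F] (Γ : AddSubgroup F) (h1 : (1 : F) ∈ Γ)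
    (a : Γ → F) (hfin : (Function.support a).Finite)
    (hA : ∀ γ : Γ, ((γ : F) + 1) * a γ = ((γ : F) - 2) * a (γ - ⟨1, h1⟩))
    (hB : ∀ γ : Γ, (γ : F) * a (γ - ⟨1, h1⟩) = ((γ : F) - 3) * a (γ - ⟨1, h1⟩ - ⟨1, h1⟩))
    (hC : ∀ γ : Γ, ((γ : F) + 2) * a γ = ((γ : F) - 4) * a (γ - ⟨1, h1⟩ - ⟨1, h1⟩)) :
    ∀ γ : Γ, a γ = 0 := by
  intro δ
  set γ : Γ := δ + ⟨1, h1⟩ + ⟨1, h1⟩ with hγ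
  have e2 : γ - ⟨1, h1⟩ - ⟨1, h1⟩ = δ := by
    rw [hγ]; abel
  have hc : (γ : F) = (δ : F) + 1 + 1 := by
    rw [hγ]; push_cast; ring
  have A := hA γ
  have B := hB γ
  have C := hC γ
  rw [e2] at B C
  rw [hc] at A B C
  set c : F := (δ : F)
  linear_combination (-(c + 4) * (c + 2) * A - c * (c + 4) * B + (c + 3) * (c + 2) * C) / 12
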